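/- arXiv:2004.02679 — 9 statements merged into one kernel-verified Lean document; each statement's English description precedes it below -/
import Mathlib

section
/- Let $w = a + bi$ with $a, b \in \mathbb{R}$, $b \neq 0$, and let $A_n \in M_n(\mathbb{C})$ be the selfadjoint matrix with zero diagonal, all entries above the diagonal equal to $w$, and all entries below the diagonal equal to $\bar{w}$. Then the characteristic polynomial $\chi_n(\lambda) = \det(\lambda I - A_n)$ satisfies the recurrence $\chi_n(\lambda) = (2\lambda + w + \bar{w})\chi_{n-1}(\lambda) - (\lambda + w)(\lambda + \bar{w})\chi_{n-2}(\lambda)$ with $\chi_0(\lambda) = 1$, $\chi_1(\lambda) = \lambda$. -/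
open Matrix Complex

/-- The selfadjoint matrix with zero diagonal, entries `w` above the
diagonal and `conj w` below the diagonal. -/
def triMat (w : ℂ) (n : ℕ) : Matrix (Fin n) (Fin n) ℂ :=
  Matrix.of fun i j => if (i : ℕ) < (j : ℕ) then w
    else if (j : ℕ) < (i : ℕ) then (starRingEnd ℂ) w else 0

/-- The characteristic polynomial `χ_n(λ) = det (λ I - A_n)` evaluated at `λ`. -/
noncomputable def chi (w : ℂ) (n : ℕ) (lam : ℂ) : ℂ :=
  (lam • (1 : Matrix (Fin n) (Fin n) ℂ) - triMat w n).det

lemma triEntry (w lam : ℂ) (m : ℕ) (i j : Fin m) :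
    (lam • (1 : Matrix (Fin m) (Fin m) ℂ) - triMat w m) i j =
      if (i : ℕ) = (j : ℕ) then lam
      else if (i : ℕ) < (j : ℕ) then -w else -((starRingEnd ℂ) w) := by
  have hij : i = j ↔ (i : ℕ) = (j : ℕ) := Fin.ext_iff
  simp only [Matrix.sub_apply, Matrix.smul_apply, Matrix.one_apply, triMat, Matrix.of_apply,
    smul_eq_mul, mul_ite, mul_one, mul_zero]
  split_ifs with h1 h2 h3 h4 h5 <;> simp_all <;> omega

lemma chi_rec (w lam : ℂ) (n : ℕ) :
    chi w (n + 2) lam =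
      (2 * lam + w + (starRingEnd ℂ) w) * chi w (n + 1) lam -
        (lam + w) * (lam + (starRingEnd ℂ) w) * chi w n lam := by
  set c := (starRingEnd ℂ) w with hc
  set M := lam • (1 : Matrix (Fin (n + 2)) (Fin (n + 2)) ℂ) - triMat w (n + 2) with hM
  have h01 : (0 : Fin (n + 2)) ≠ 1 := by simp [Fin.ext_iff]
  set R := M.updateRow 0 (M 0 + (-1 : ℂ) • M 1) with hR
  set B := R.updateCol 0 (fun k => R k 0 + (-1 : ℂ) • R k 1) with hB
  have hdet : chi w (n + 2) lam = B.det := by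
    rw [hB, Matrix.det_updateCol_add_smul_self R h01, hR,
        Matrix.det_updateRow_add_smul_self M h01, chi]
  -- entry values of M
  have hv0 : ((0 : Fin (n + 2)) : ℕ) = 0 := rfl
  have hv1 : ((1 : Fin (n + 2)) : ℕ) = 1 := rfl
  have hMe : ∀ i j : Fin (n + 2), M i j =
      if (i : ℕ) = (j : ℕ) then lam
      else if (i : ℕ) < (j : ℕ) then -w else -c := fun i j => triEntry w lam (n + 2) i j
  -- entries of B in row 0 and column 0
  have hB00 : B 0 0 = 2 * lam + w + c := by
    rw [hB, Matrix.updateCol_self, hR, Matrix.updateRow_self]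
    simp only [Pi.add_apply, Pi.smul_apply, hMe, hv0, hv1, smul_eq_mul]
    norm_num
    all_goals ring
  have hB01 : B 0 1 = -(lam + w) := by
    rw [hB, Matrix.updateCol_ne h01.symm, hR, Matrix.updateRow_self]
    simp only [Pi.add_apply, Pi.smul_apply, hMe, hv0, hv1, smul_eq_mul]
    norm_num
    all_goals ring
  have hB0j : ∀ j : Fin n, B 0 j.succ.succ = 0 := by
    intro j
    rw [hB, Matrix.updateCol_ne (by simp [Fin.ext_iff]), hR, Matrix.updateRow_self]
    simp only [Pi.add_apply, Pi.smul_apply, hMe, hv0, hv1, Fin.val_succ]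
    norm_num
  have hBk0 : ∀ k : Fin (n + 2), k ≠ 0 → B k 0 = M k 0 - M k 1 := by
    intro k hk
    rw [hB, Matrix.updateCol_self, hR, Matrix.updateRow_ne hk]
    simp only [smul_eq_mul]; ring
  have hB10 : B 1 0 = -(lam + c) := by
    rw [hBk0 1 h01.symm]
    simp only [hMe, hv0, hv1]
    norm_num
    all_goals ring
  have hBs0 : ∀ k : Fin n, B k.succ.succ 0 = 0 := by
    intro k
    rw [hBk0 _ (by simp [Fin.ext_iff])]
    simp only [hMe, hv0, hv1, Fin.val_succ]
    norm_num
  have hBsucc : ∀ (i j : Fin (n + 1)), B i.succ j.succ = M i.succ j.succ := by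
    intro i j
    rw [hB, Matrix.updateCol_ne (Fin.succ_ne_zero j), hR,
      Matrix.updateRow_ne (Fin.succ_ne_zero i)]
  -- the two submatrices
  have hsub1 : B.submatrix Fin.succ Fin.succ =
      lam • (1 : Matrix (Fin (n + 1)) (Fin (n + 1)) ℂ) - triMat w (n + 1) := by
    ext i j
    rw [Matrix.submatrix_apply, hBsucc, hMe, triEntry]
    simp [Fin.val_succ, hc]
  -- succAbove facts
  have hsa0 : (1 : Fin (n + 2)).succAbove (0 : Fin (n + 1)) = 0 := by
    simp [Fin.succAbove, Fin.lt_def, Fin.ext_iff]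
  have hsak : ∀ k : Fin n, (1 : Fin (n + 2)).succAbove k.succ = k.succ.succ := by
    intro k
    simp [Fin.succAbove, Fin.lt_def, Fin.ext_iff]
  set C := B.submatrix Fin.succ (1 : Fin (n + 2)).succAbove with hC
  have hsub2 : C.submatrix Fin.succ Fin.succ =
      lam • (1 : Matrix (Fin n) (Fin n) ℂ) - triMat w n := by
    ext i j
    rw [Matrix.submatrix_apply, hC, Matrix.submatrix_apply, hsak, hBsucc, hMe, triEntry]
    simp [Fin.val_succ, hc]
  have hCdet : C.det = -(lam + c) * chi w n lam := by
    rw [Matrix.det_succ_column_zero, Fin.sum_univ_succ]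
    have hz : ∀ i : Fin n, (-1 : ℂ) ^ ((i.succ : Fin (n+1)) : ℕ) * C i.succ 0 *
        (C.submatrix i.succ.succAbove Fin.succ).det = 0 := by
      intro i
      have : C i.succ 0 = 0 := by
        rw [hC, Matrix.submatrix_apply, hsa0]
        exact hBs0 i
      rw [this]; ring
    rw [Finset.sum_congr rfl fun i _ => hz i, Finset.sum_const, smul_zero, add_zero]
    have hC00 : C 0 0 = -(lam + c) := by
      rw [hC, Matrix.submatrix_apply, hsa0, Fin.succ_zero_eq_one]
      exact hB10
    rw [hC00, Fin.succAbove_zero, hsub2, chi]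
    norm_num
  rw [hdet, Matrix.det_succ_row_zero, Fin.sum_univ_succ, Fin.sum_univ_succ]
  have hz2 : ∀ j : Fin n, (-1 : ℂ) ^ (((j.succ.succ : Fin (n+2))) : ℕ) * B 0 j.succ.succ *
      ((B.submatrix Fin.succ (j.succ.succ : Fin (n+2)).succAbove).det) = 0 := by
    intro j
    rw [hB0j]; ring
  rw [Finset.sum_congr rfl fun j _ => hz2 j, Finset.sum_const, smul_zero, add_zero,
    Fin.succ_zero_eq_one, Fin.succAbove_zero, hsub1, hB00, hB01, ← hC, hCdet]
  rw [show chi w (n+1) lam = (lam • (1 : Matrix (Fin (n + 1)) (Fin (n + 1)) ℂ) -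
    triMat w (n + 1)).det from rfl]
  simp only [Fin.val_zero, Fin.val_one, pow_zero, pow_one]
  ring

theorem chi_recurrence (a b : ℝ) (hb : b ≠ 0) (w : ℂ) (hw : w = a + b * I) (lam : ℂ) :
    chi w 0 lam = 1 ∧ chi w 1 lam = lam ∧
    ∀ n : ℕ, chi w (n + 2) lam =
      (2 * lam + w + (starRingEnd ℂ) w) * chi w (n + 1) lam -
        (lam + w) * (lam + (starRingEnd ℂ) w) * chi w n lam := by
  refine ⟨?_, ?_, fun n => chi_rec w lam n⟩
  · simp [chi]
  · simp [chi, Matrix.det_fin_one, triMat]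
end

section
/- Let $w = a + bi$ with $b \neq 0$, and let $A_n$ be the $n \times n$ matrix with zero diagonal, upper-triangular entries $w$ and lower-triangular entries $\bar{w}$. Then $\det(\lambda I - A_n) = \dfrac{w(\lambda + \bar{w})^n - \bar{w}(\lambda + w)^n}{w - \bar{w}}$. -/
open Matrix Complex


lemma key_sum (α β : ℂ) {n i : ℕ} (hi : i < n) :
    α * (β ^ (n - 1 - i) * α ^ i) -
      (β - α) * ∑ k ∈ Finset.Ioo i n, β ^ (n - 1 - k) * α ^ k = α ^ n := by
  have h1 : Finset.Ioo i n = Finset.Ico (i + 1) n := rfl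
  rw [h1, Finset.sum_Ico_eq_sum_range]
  set m := n - (i + 1) with hm
  have h2 : ∑ t ∈ Finset.range m, β ^ (n - 1 - (i + 1 + t)) * α ^ (i + 1 + t)
      = (∑ t ∈ Finset.range m, α ^ t * β ^ (m - 1 - t)) * α ^ (i + 1) := by
    rw [Finset.sum_mul]
    refine Finset.sum_congr rfl fun t ht => ?_
    rw [Finset.mem_range] at ht
    have : n - 1 - (i + 1 + t) = m - 1 - t := by omega
    rw [this]; ring
  rw [h2]
  have hg := geom_sum₂_mul α β m
  have h3 : n - 1 - i = m := by omega
  have h4 : n = i + 1 + m := by omega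
  rw [h3, h4]
  linear_combination (α ^ (i + 1)) * hg

lemma det_helper (n : ℕ) (u v lam : ℂ) (huv : u ≠ v) (hα : lam + v ≠ 0) :
    (lam • (1 : Matrix (Fin n) (Fin n) ℂ) -
      Matrix.of (fun i j : Fin n => if (i : ℕ) < (j : ℕ) then u
        else if (j : ℕ) < (i : ℕ) then v else 0)).det
      = (u * (lam + v) ^ n - v * (lam + u) ^ n) / (u - v) := by
  obtain ⟨α, hαdef⟩ : ∃ α, α = lam + v := ⟨_, rfl⟩
  obtain ⟨β, hβdef⟩ : ∃ β, β = lam + u := ⟨_, rfl⟩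
  rw [← hαdef, ← hβdef]
  have hα : α ≠ 0 := hαdef ▸ hα
  have hc0 : u - v ≠ 0 := sub_ne_zero.mpr huv
  have hαn : α ^ n ≠ 0 := pow_ne_zero _ hα
  obtain ⟨S, hSdef⟩ : ∃ S : Matrix (Fin n) (Fin n) ℂ, S = Matrix.of (fun i j : Fin n =>
    if (i : ℕ) = (j : ℕ) then α else if (i : ℕ) < (j : ℕ) then -(u - v) else 0) := ⟨_, rfl⟩
  obtain ⟨x, hxdef⟩ : ∃ x : Fin n → ℂ,
    x = fun i : Fin n => β ^ (n - 1 - (i : ℕ)) * α ^ (i : ℕ) / α ^ n := ⟨_, rfl⟩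
  -- S *ᵥ x = 1
  have hSx : ∀ i : Fin n, (∑ j : Fin n, S i j * x j) = 1 := by
    intro i
    rw [hSdef, hxdef]
    have hfin : ∑ j : Fin n, (Matrix.of (fun i j : Fin n =>
        if (i : ℕ) = (j : ℕ) then α else if (i : ℕ) < (j : ℕ) then -(u - v) else 0)) i j *
        (β ^ (n - 1 - (j : ℕ)) * α ^ (j : ℕ) / α ^ n) = ∑ k ∈ Finset.range n,
        (if (i : ℕ) = k then α else if (i : ℕ) < k then -(u - v) else 0) *
          (β ^ (n - 1 - k) * α ^ k / α ^ n) :=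
      Fin.sum_univ_eq_sum_range (fun k => (if (i : ℕ) = k then α
        else if (i : ℕ) < k then -(u - v) else 0) * (β ^ (n - 1 - k) * α ^ k / α ^ n)) n
    rw [hfin]
    have hsplit : ∀ k ∈ Finset.range n,
        (if (i : ℕ) = k then α else if (i : ℕ) < k then -(u - v) else 0) *
          (β ^ (n - 1 - k) * α ^ k / α ^ n)
        = (if k = (i : ℕ) then α * (β ^ (n - 1 - k) * α ^ k / α ^ n) else 0)
          + (if (i : ℕ) < k then -(u - v) * (β ^ (n - 1 - k) * α ^ k / α ^ n) else 0) := by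
      intro k _
      rcases lt_trichotomy (i : ℕ) k with h | h | h
      · simp [h, Nat.ne_of_lt h, (Nat.ne_of_lt h).symm]
      · simp [h, lt_irrefl]
      · simp [Nat.ne_of_gt h, (Nat.ne_of_gt h).symm, not_lt_of_gt h, Nat.not_lt.mpr (le_of_lt h)]
    rw [Finset.sum_congr rfl hsplit, Finset.sum_add_distrib,
      Finset.sum_ite_eq' (Finset.range n) (i : ℕ)
        (fun k => α * (β ^ (n - 1 - k) * α ^ k / α ^ n)),
      if_pos (Finset.mem_range.mpr i.isLt)]
    have hfil : ∑ k ∈ Finset.range n,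
        (if (i : ℕ) < k then -(u - v) * (β ^ (n - 1 - k) * α ^ k / α ^ n) else 0)
        = ∑ k ∈ Finset.Ioo (i : ℕ) n, -(u - v) * (β ^ (n - 1 - k) * α ^ k / α ^ n) := by
      rw [← Finset.sum_filter]
      congr 1
      ext k
      simp only [Finset.mem_filter, Finset.mem_range, Finset.mem_Ioo]
      tauto
    rw [hfil]
    have hk := key_sum α β i.isLt
    have hβα : β - α = u - v := by rw [hαdef, hβdef]; ring
    rw [show -(u - v) = -(β - α) by rw [hβα]]
    have hsum2 : ∑ k ∈ Finset.Ioo (i : ℕ) n, -(β - α) * (β ^ (n - 1 - k) * α ^ k / α ^ n)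
        = -((β - α) * ∑ k ∈ Finset.Ioo (i : ℕ) n, β ^ (n - 1 - k) * α ^ k) * (α ^ n)⁻¹ := by
      rw [Finset.mul_sum, ← Finset.sum_neg_distrib, Finset.sum_mul]
      exact Finset.sum_congr rfl fun k _ => by rw [div_eq_mul_inv]; ring
    rw [hsum2]
    field_simp
    linear_combination hk
  have hSx' : S *ᵥ x = fun _ => (1 : ℂ) := funext fun i => hSx i
  have hfact : lam • (1 : Matrix (Fin n) (Fin n) ℂ) -
      Matrix.of (fun i j : Fin n => if (i : ℕ) < (j : ℕ) then u
        else if (j : ℕ) < (i : ℕ) then v else 0)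
      = S * (1 + Matrix.replicateCol (Fin 1) ((-v) • x) * Matrix.replicateRow (Fin 1) (fun _ => (1 : ℂ))) := by
    rw [Matrix.mul_add, Matrix.mul_one, ← Matrix.mul_assoc, ← Matrix.replicateCol_mulVec,
      Matrix.mulVec_smul, hSx']
    have hconst : Matrix.replicateCol (Fin 1) ((-v) • fun _ : Fin n => (1 : ℂ)) *
        Matrix.replicateRow (Fin 1) (fun _ : Fin n => (1 : ℂ)) = Matrix.of (fun _ _ : Fin n => -v) := by
      ext i j
      simp [Matrix.mul_apply]
    rw [hconst]
    ext i j
    simp only [Matrix.sub_apply, Matrix.smul_apply, Matrix.one_apply, Matrix.of_apply,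
      Matrix.add_apply, hSdef, Fin.ext_iff, smul_eq_mul]
    split_ifs <;> first | (exfalso; omega) | ring1 | linear_combination -hαdef | linear_combination hαdef
  rw [hfact, Matrix.det_mul, (show Matrix.det (1 + Matrix.replicateCol (Fin 1) ((-v) • x) * Matrix.replicateRow (Fin 1) (fun _ => (1 : ℂ)) : Matrix (Fin n) (Fin n) ℂ) = 1 + (fun _ => (1 : ℂ)) ⬝ᵥ ((-v) • x) by exact Matrix.det_one_add_replicateCol_mul_replicateRow (ι := Fin 1) ((-v) • x) (fun _ => (1 : ℂ)))]
  have hBT : S.BlockTriangular id := by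
    intro i j hji
    have h1 : ¬ ((i : ℕ) = (j : ℕ)) := Nat.ne_of_gt hji
    have h2 : ¬ ((i : ℕ) < (j : ℕ)) := Nat.lt_asymm hji
    rw [hSdef]
    simp only [Matrix.of_apply, if_neg h1, if_neg h2]
  have hdetS : S.det = α ^ n := by
    rw [Matrix.det_of_upperTriangular hBT, hSdef]
    simp
  rw [hdetS]
  have hdot : (fun _ : Fin n => (1 : ℂ)) ⬝ᵥ ((-v) • x)
      = -v * (∑ k ∈ Finset.range n, β ^ (n - 1 - k) * α ^ k) / α ^ n := by
    have h0 : (fun _ : Fin n => (1 : ℂ)) ⬝ᵥ ((-v) • x)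
        = ∑ i : Fin n, -v * (β ^ (n - 1 - (i : ℕ)) * α ^ (i : ℕ) / α ^ n) := by
      simp [dotProduct, hxdef]
    rw [h0, Fin.sum_univ_eq_sum_range
      (fun k => -v * (β ^ (n - 1 - k) * α ^ k / α ^ n)) n,
      eq_div_iff hαn, Finset.sum_mul, Finset.mul_sum]
    exact Finset.sum_congr rfl fun k _ => by
      rw [mul_assoc, div_mul_cancel₀ _ hαn]
  rw [hdot]
  have hg := geom_sum₂_mul α β n
  have hcomm : (∑ t ∈ Finset.range n, α ^ t * β ^ (n - 1 - t))
      = ∑ k ∈ Finset.range n, β ^ (n - 1 - k) * α ^ k :=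
    Finset.sum_congr rfl fun k _ => mul_comm _ _
  rw [hcomm] at hg
  have hβα : β - α = u - v := by rw [hαdef, hβdef]; ring
  rw [eq_div_iff hc0, ← hβα]
  field_simp
  linear_combination v * hg + (α ^ n) * hβα

theorem det_triMat (a b : ℝ) (hb : b ≠ 0) (w : ℂ) (hw : w = a + b * I)
    (n : ℕ) (lam : ℂ) :
    (lam • (1 : Matrix (Fin n) (Fin n) ℂ) - triMat w n).det =
      (w * (lam + (starRingEnd ℂ) w) ^ n - (starRingEnd ℂ) w * (lam + w) ^ n) /
        (w - (starRingEnd ℂ) w) := by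
  have hw2 : w ≠ (starRingEnd ℂ) w := by
    intro h
    have h2 := congrArg Complex.im h
    rw [hw] at h2
    simp [Complex.add_im, Complex.mul_im] at h2
    exact hb (by linarith)
  by_cases hα : lam + (starRingEnd ℂ) w ≠ 0
  · exact det_helper n w ((starRingEnd ℂ) w) lam hw2 hα
  · push_neg at hα
    have hβ : lam + w ≠ 0 := by
      intro h
      exact hw2 (by linear_combination h - hα)
    have h2 := det_helper n ((starRingEnd ℂ) w) w lam (Ne.symm hw2) hβ
    have htr : (lam • (1 : Matrix (Fin n) (Fin n) ℂ) - triMat w n)ᵀ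
        = lam • (1 : Matrix (Fin n) (Fin n) ℂ) -
          Matrix.of (fun i j : Fin n => if (i : ℕ) < (j : ℕ) then (starRingEnd ℂ) w
            else if (j : ℕ) < (i : ℕ) then w else 0) := by
      ext i j
      simp only [Matrix.transpose_apply, Matrix.sub_apply, Matrix.smul_apply,
        Matrix.one_apply, Matrix.of_apply, triMat, smul_eq_mul, Fin.ext_iff]
      split_ifs <;> first | rfl | (exfalso; omega)
    rw [← Matrix.det_transpose, htr, h2]
    rw [div_eq_div_iff (sub_ne_zero.mpr (Ne.symm hw2)) (sub_ne_zero.mpr hw2)]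
    ring
end

section
/- Let $a, b \in \mathbb{R}$ with $b \neq 0$, $w = a + bi$, $\alpha = \operatorname{arccot}(a/b)$, and let $A_n$ be the $n\times n$ matrix with zero diagonal, upper entries $w$, lower entries $\bar{w}$. Then the eigenvalues of $A_n$ are exactly $\lambda_k = b \cot\frac{\alpha + k\pi}{n} - a$ for $k = 0, 1, \dots, n-1$. -/
open Matrix Complex Real

/-- `arccot x ∈ (0, π)`. -/
noncomputable def arccot (x : ℝ) : ℝ := Real.pi / 2 - Real.arctan x

noncomputable def redMat (w lam : ℂ) (n : ℕ) : Matrix (Fin n) (Fin n) ℂ :=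
  Matrix.of fun i j =>
    if (i : ℕ) = n - 1 then (if (j : ℕ) = n - 1 then lam else -((starRingEnd ℂ) w))
    else if (j : ℕ) = (i : ℕ) then lam + (starRingEnd ℂ) w
    else if (j : ℕ) = (i : ℕ) + 1 then -(lam + w) else 0

lemma minor0 (w lam : ℂ) (n : ℕ) (hpos : 0 < n) :
    (redMat w lam (n+1)).submatrix (Fin.succAbove 0) Fin.succ = redMat w lam n := by
  ext i j
  have hi := i.isLt
  have hj := j.isLt
  rw [Matrix.submatrix_apply, Fin.zero_succAbove]
  simp only [redMat, Matrix.of_apply, Fin.val_succ, Nat.add_sub_cancel]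
  split_ifs <;> first | rfl | omega

lemma minorLast (w lam : ℂ) (n : ℕ) :
    ((redMat w lam (n+1)).submatrix (Fin.succAbove (Fin.last n)) Fin.succ).det = (-(lam + w))^n := by
  have key : ∀ i j : Fin n, (redMat w lam (n+1)).submatrix (Fin.succAbove (Fin.last n)) Fin.succ i j
      = if (j:ℕ) = (i:ℕ) then -(lam+w) else if (j:ℕ) + 1 = (i:ℕ) then lam + (starRingEnd ℂ) w else 0 := by
    intro i j
    have hi := i.isLt
    have hj := j.isLt
    rw [Matrix.submatrix_apply, Fin.succAbove_last]
    simp only [redMat, Matrix.of_apply, Fin.val_succ, Fin.coe_castSucc, Nat.add_sub_cancel]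
    split_ifs <;> first | rfl | omega
  have hlt : ((redMat w lam (n+1)).submatrix (Fin.succAbove (Fin.last n)) Fin.succ).BlockTriangular OrderDual.toDual := by
    intro i j hij
    have hij' : (i:ℕ) < (j:ℕ) := hij
    rw [key]; rw [if_neg (by omega), if_neg (by omega)]
  rw [Matrix.det_of_lowerTriangular _ hlt]
  rw [Finset.prod_congr rfl (fun i _ => by rw [key, if_pos rfl] : ∀ i ∈ Finset.univ, _ = -(lam+w))]
  simp

lemma det_redMat (w lam : ℂ) : ∀ n : ℕ, 1 ≤ n →
    (redMat w lam n).det * (w - (starRingEnd ℂ) w) =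
      w * (lam + (starRingEnd ℂ) w) ^ n - (starRingEnd ℂ) w * (lam + w) ^ n := by
  intro n
  induction n with
  | zero => omega
  | succ n ih =>
    intro _
    rcases Nat.eq_zero_or_pos n with h0 | hpos
    · subst h0
      have : (redMat w lam 1).det = lam := by
        rw [show (redMat w lam 1).det = redMat w lam 1 0 0 from Matrix.det_fin_one _]
        simp [redMat]
      rw [this]; ring
    · have hsum : (redMat w lam (n+1)).det =
          (lam + (starRingEnd ℂ) w) * ((redMat w lam (n+1)).submatrix (Fin.succAbove 0) Fin.succ).det
          + (-1)^n * (-((starRingEnd ℂ) w)) * ((redMat w lam (n+1)).submatrix (Fin.succAbove (Fin.last n)) Fin.succ).det := by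
        rw [Matrix.det_succ_column_zero (redMat w lam (n+1))]
        rw [Finset.sum_eq_add (0 : Fin (n+1)) (Fin.last n)]
        · have h00 : redMat w lam (n+1) 0 0 = lam + (starRingEnd ℂ) w := by
            simp only [redMat, Matrix.of_apply, Fin.val_zero, Nat.add_sub_cancel]
            split_ifs <;> first | rfl | omega
          have hl0 : redMat w lam (n+1) (Fin.last n) 0 = -((starRingEnd ℂ) w) := by
            simp only [redMat, Matrix.of_apply, Fin.val_zero, Fin.val_last, Nat.add_sub_cancel]
            split_ifs <;> first | rfl | omega | simp_all
          rw [h00, hl0]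
          simp [Fin.val_last]
        · exact fun h => absurd (congrArg Fin.val h) (by simp [Fin.val_last]; omega)
        · intro c _ hc
          have hc0 : (c : ℕ) ≠ 0 := fun h => hc.1 (Fin.ext h)
          have hcl : (c : ℕ) ≠ n := fun h => hc.2 (Fin.ext (h.trans (Fin.val_last n).symm))
          have hz : redMat w lam (n+1) c 0 = 0 := by
            simp only [redMat, Matrix.of_apply, Fin.val_zero, Nat.add_sub_cancel]
            rw [if_neg (by omega)]; simp [show (0:ℕ) ≠ ↑c by omega]
          simp [hz]
        · simp
        · simp
      rw [hsum, minor0 w lam n hpos, minorLast w lam n]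
      have ihh := ih hpos
      rw [show (-(lam + w)) = (-1) * (lam + w) from by ring, mul_pow]
      have h1 : ((-1:ℂ)^n) * ((-1:ℂ)^n) = 1 := by rw [← mul_pow]; norm_num
      linear_combination (lam + (starRingEnd ℂ) w) * ihh
        + (-((starRingEnd ℂ) w) * (lam + w)^n * (w - (starRingEnd ℂ) w)) * h1

def elimMat (n : ℕ) : Matrix (Fin n) (Fin n) ℂ :=
  Matrix.of fun i j => if j = i then 1 else if (j:ℕ) = (i:ℕ) + 1 then -1 else 0

lemma det_elimMat (n : ℕ) : (elimMat n).det = 1 := by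
  have h : (elimMat n).BlockTriangular id := by
    intro i j hij
    have : (j:ℕ) < (i:ℕ) := hij
    simp only [elimMat, Matrix.of_apply]
    rw [if_neg (fun h => by simp [h] at this), if_neg (by omega)]
  rw [Matrix.det_of_upperTriangular h]
  have : ∀ i : Fin n, elimMat n i i = 1 := fun i => by simp [elimMat]
  simp [this]

lemma elim_mul (w lam : ℂ) (n : ℕ) (hn : 1 ≤ n) :
    elimMat n * (lam • (1 : Matrix (Fin n) (Fin n) ℂ) - triMat w n) = redMat w lam n := by
  ext i j
  rw [Matrix.mul_apply]
  have hM : ∀ k j : Fin n, (lam • (1 : Matrix (Fin n) (Fin n) ℂ) - triMat w n) k j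
      = if (k:ℕ) = (j:ℕ) then lam else if (k:ℕ) < (j:ℕ) then -w else -((starRingEnd ℂ) w) := by
    intro k j
    simp only [Matrix.sub_apply, Matrix.smul_apply, Matrix.one_apply, triMat, Matrix.of_apply,
      smul_eq_mul, Fin.ext_iff]
    split_ifs <;> first | ring1 | omega | (exfalso; omega)
  by_cases hi : (i:ℕ) = n - 1
  · rw [Finset.sum_eq_single i]
    · have : elimMat n i i = 1 := by simp [elimMat]
      rw [this, hM, one_mul]
      simp only [redMat, Matrix.of_apply, if_pos hi]
      have hj := j.isLt
      split_ifs <;> first | rfl | omega | (exfalso; omega)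
    · intro k _ hk
      have : elimMat n i k = 0 := by
        simp only [elimMat, Matrix.of_apply]
        have hk' : (k:ℕ) ≠ (i:ℕ)+1 := by have := k.isLt; omega
        rw [if_neg hk, if_neg hk']
      simp [this]
    · simp
  · have hlt : (i:ℕ) + 1 < n := by have := i.isLt; omega
    set i' : Fin n := ⟨(i:ℕ)+1, hlt⟩ with hi'
    rw [Finset.sum_eq_add i i' (by intro h; have := congrArg Fin.val h; simp [hi'] at this)]
    · have e1 : elimMat n i i = 1 := by simp [elimMat]
      have e2 : elimMat n i i' = -1 := by
        simp [elimMat, Fin.ext_iff, hi']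
      rw [e1, e2, hM, hM, one_mul]
      simp only [redMat, Matrix.of_apply, if_neg hi, hi']
      have hj := j.isLt
      split_ifs <;> first | ring1 | omega | (exfalso; omega)
    · intro k _ hk
      have : elimMat n i k = 0 := by
        simp only [elimMat, Matrix.of_apply]
        have h2 : (k:ℕ) ≠ (i:ℕ)+1 := by
          intro h; exact hk.2 (Fin.ext (by simp [hi', h]))
        rw [if_neg hk.1, if_neg h2]
      simp [this]
    · simp
    · simp

lemma arccot_pos (x : ℝ) : 0 < arccot x := by
  have := Real.arctan_lt_pi_div_two x
  unfold arccot; linarith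

lemma arccot_lt_pi (x : ℝ) : arccot x < π := by
  have := Real.neg_pi_div_two_lt_arctan x
  have := Real.pi_pos
  unfold arccot; linarith

lemma sin_arccot_pos (x : ℝ) : 0 < Real.sin (arccot x) :=
  Real.sin_pos_of_pos_of_lt_pi (arccot_pos x) (arccot_lt_pi x)

lemma cot_arccot (x : ℝ) : Real.cot (arccot x) = x := by
  unfold arccot
  rw [Real.cot_eq_cos_div_sin, Real.cos_pi_div_two_sub, Real.sin_pi_div_two_sub,
    ← Real.tan_eq_sin_div_cos, Real.tan_arctan]

lemma polar_plus (b θ : ℝ) (hs : Real.sin θ ≠ 0) :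
    ((b * Real.cot θ : ℝ) : ℂ) + b * I = ((b / Real.sin θ : ℝ) : ℂ) * Complex.exp (θ * I) := by
  rw [Complex.exp_mul_I, Real.cot_eq_cos_div_sin]
  rw [show Complex.cos (θ:ℂ) = ((Real.cos θ : ℝ) : ℂ) from (Complex.ofReal_cos θ).symm,
      show Complex.sin (θ:ℂ) = ((Real.sin θ : ℝ) : ℂ) from (Complex.ofReal_sin θ).symm]
  push_cast
  have hs' : Complex.sin (θ:ℂ) ≠ 0 := by
    rw [← Complex.ofReal_sin, Ne, Complex.ofReal_eq_zero]; exact hs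
  field_simp

lemma polar_minus (b θ : ℝ) (hs : Real.sin θ ≠ 0) :
    ((b * Real.cot θ : ℝ) : ℂ) - b * I = ((b / Real.sin θ : ℝ) : ℂ) * Complex.exp (-(θ * I)) := by
  rw [show -((θ:ℂ) * I) = ((-θ : ℝ):ℂ) * I by push_cast; ring, Complex.exp_mul_I, Real.cot_eq_cos_div_sin]
  rw [show Complex.cos ((-θ:ℝ):ℂ) = ((Real.cos (-θ) : ℝ) : ℂ) from (Complex.ofReal_cos _).symm,
      show Complex.sin ((-θ:ℝ):ℂ) = ((Real.sin (-θ) : ℝ) : ℂ) from (Complex.ofReal_sin _).symm]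
  rw [Real.cos_neg, Real.sin_neg]
  push_cast
  have hs' : Complex.sin (θ:ℂ) ≠ 0 := by
    rw [← Complex.ofReal_sin, Ne, Complex.ofReal_eq_zero]; exact hs
  field_simp
  ring

lemma exp_sub_exp (y : ℝ) :
    Complex.exp ((y:ℂ) * I) - Complex.exp (-((y:ℂ) * I)) = 2 * I * ((Real.sin y : ℝ) : ℂ) := by
  rw [show -((y:ℂ) * I) = ((-y : ℝ):ℂ) * I by push_cast; ring, Complex.exp_mul_I, Complex.exp_mul_I]
  rw [show Complex.cos ((-y:ℝ):ℂ) = Complex.cos (-(y:ℂ)) by norm_cast,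
      show Complex.sin ((-y:ℝ):ℂ) = Complex.sin (-(y:ℂ)) by norm_cast,
      Complex.cos_neg, Complex.sin_neg, Complex.ofReal_sin]
  ring

lemma cond_iff (a b : ℝ) (hb : b ≠ 0) (n : ℕ) (hn : 1 ≤ n) (θ : ℝ) (hs : Real.sin θ ≠ 0) :
    (((a:ℂ) + b * I) * (((b * Real.cot θ - a : ℝ) : ℂ) + (starRingEnd ℂ) ((a:ℂ) + b * I)) ^ n
      - (starRingEnd ℂ) ((a:ℂ) + b * I) * (((b * Real.cot θ - a : ℝ) : ℂ) + ((a:ℂ) + b * I)) ^ n = 0)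
    ↔ Real.sin (arccot (a / b) - n * θ) = 0 := by
  set α := arccot (a / b) with hα
  have hsα : Real.sin α ≠ 0 := ne_of_gt (sin_arccot_pos _)
  have hacot : b * Real.cot α = a := by
    rw [cot_arccot]; field_simp
  have hacot' : ((b * Real.cot α : ℝ) : ℂ) = (a:ℂ) := Complex.ofReal_inj.mpr hacot
  have hconj : (starRingEnd ℂ) ((a:ℂ) + b*I) = (a:ℂ) - b*I := by
    rw [map_add, _root_.map_mul, Complex.conj_ofReal, Complex.conj_ofReal, Complex.conj_I]; ring
  have hw : ((a:ℂ) + b * I) = ((b / Real.sin α : ℝ) : ℂ) * Complex.exp ((α:ℂ) * I) := by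
    rw [← polar_plus b α hsα, hacot']
  have hwc : (starRingEnd ℂ) ((a:ℂ) + b * I)
      = ((b / Real.sin α : ℝ) : ℂ) * Complex.exp (-((α:ℂ) * I)) := by
    rw [hconj, ← hacot']
    exact polar_minus b α hsα
  have hp : (((b * Real.cot θ - a : ℝ) : ℂ) + ((a:ℂ) + b * I))
      = ((b / Real.sin θ : ℝ) : ℂ) * Complex.exp ((θ:ℂ) * I) := by
    rw [← polar_plus b θ hs]; push_cast; ring
  have hq : (((b * Real.cot θ - a : ℝ) : ℂ) + (starRingEnd ℂ) ((a:ℂ) + b * I))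
      = ((b / Real.sin θ : ℝ) : ℂ) * Complex.exp (-((θ:ℂ) * I)) := by
    rw [hconj, ← polar_minus b θ hs]
    push_cast; ring
  rw [hp, hq, hwc, hw]
  rw [mul_pow, mul_pow, ← Complex.exp_nat_mul, ← Complex.exp_nat_mul]
  have key : ((b / Real.sin α : ℝ) : ℂ) * Complex.exp ((α:ℂ) * I)
        * (((b / Real.sin θ : ℝ) : ℂ) ^ n * Complex.exp ((n:ℂ) * -((θ:ℂ) * I)))
      - ((b / Real.sin α : ℝ) : ℂ) * Complex.exp (-((α:ℂ) * I))
        * (((b / Real.sin θ : ℝ) : ℂ) ^ n * Complex.exp ((n:ℂ) * ((θ:ℂ) * I)))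
      = ((b / Real.sin α : ℝ) : ℂ) * ((b / Real.sin θ : ℝ) : ℂ) ^ n
        * (2 * I * ((Real.sin (α - n * θ) : ℝ) : ℂ)) := by
    rw [← exp_sub_exp (α - n * θ)]
    rw [show -(((α - n * θ : ℝ) : ℂ) * I) = -((α:ℂ)*I) + (n:ℂ) * ((θ:ℂ)*I) by push_cast; ring,
        show ((α - n * θ : ℝ) : ℂ) * I = (α:ℂ)*I + (n:ℂ) * -((θ:ℂ)*I) by push_cast; ring,
        Complex.exp_add, Complex.exp_add]
    ring
  rw [key]
  constructor
  · intro h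
    have h2 : ((Real.sin (α - n * θ) : ℝ) : ℂ) = 0 := by
      have hb1 : ((b / Real.sin α : ℝ) : ℂ) ≠ 0 := by
        simp only [ne_eq, Complex.ofReal_eq_zero]
        exact div_ne_zero hb hsα
      have hb2 : ((b / Real.sin θ : ℝ) : ℂ) ^ n ≠ 0 := by
        apply pow_ne_zero
        simp only [ne_eq, Complex.ofReal_eq_zero]
        exact div_ne_zero hb hs
      have hI : (2 : ℂ) * I ≠ 0 := by simp [Complex.I_ne_zero]
      rcases mul_eq_zero.mp h with h' | h'
      · rcases mul_eq_zero.mp h' with h'' | h''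
        · exact absurd h'' hb1
        · exact absurd h'' hb2
      · rcases mul_eq_zero.mp h' with h'' | h''
        · exact absurd h'' hI
        · exact h''
    exact_mod_cast h2
  · intro h
    rw [h]
    simp

theorem eigenvalues_triMat (a b : ℝ) (hb : b ≠ 0) (n : ℕ) (hn : 1 ≤ n) :
    spectrum ℂ (triMat (a + b * I) n) =
      {x : ℂ | ∃ k : Fin n,
        x = ((b * Real.cot ((arccot (a / b) + k * Real.pi) / n) - a : ℝ) : ℂ)} := by
  have hn0 : (0:ℝ) < (n : ℝ) := by exact_mod_cast Nat.lt_of_lt_of_le Nat.zero_lt_one hn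
  have hπ := Real.pi_pos
  set α := arccot (a / b) with hα
  have hα1 : 0 < α := arccot_pos _
  have hα2 : α < π := arccot_lt_pi _
  set w : ℂ := ↑a + ↑b * I with hw
  have hwsub : w - (starRingEnd ℂ) w ≠ 0 := by
    intro h0
    have h1 : (w - (starRingEnd ℂ) w).im = 2 * b := by simp [hw]; ring
    rw [h0] at h1
    simp at h1
    exact hb (by linarith)
  ext x
  simp only [Set.mem_setOf_eq]
  have hspec : x ∈ spectrum ℂ (triMat w n) ↔
      w * (x + (starRingEnd ℂ) w) ^ n - (starRingEnd ℂ) w * (x + w) ^ n = 0 := by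
    rw [spectrum.mem_iff, Algebra.algebraMap_eq_smul_one,
      Matrix.isUnit_iff_isUnit_det, isUnit_iff_ne_zero, not_ne_iff]
    have hd2 : (x • (1 : Matrix (Fin n) (Fin n) ℂ) - triMat w n).det = (redMat w x n).det := by
      rw [← elim_mul w x n hn, Matrix.det_mul, det_elimMat, one_mul]
    rw [hd2]
    constructor
    · intro h
      have hf := det_redMat w x n hn
      rw [h, zero_mul] at hf
      exact hf.symm
    · intro h
      have hf := det_redMat w x n hn
      rw [h] at hf
      exact (mul_eq_zero.mp hf).resolve_right hwsub
  rw [hspec]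
  constructor
  · intro h
    have him : x.im = 0 := by
      have h' : w * (x + (starRingEnd ℂ) w) ^ n = (starRingEnd ℂ) w * (x + w) ^ n :=
        sub_eq_zero.mp h
      have habs := congrArg (‖·‖) h'
      simp only [norm_mul, norm_pow, Complex.norm_conj] at habs
      have hwne : ‖w‖ ≠ 0 := by
        simp only [ne_eq, norm_eq_zero]
        intro h0
        have h1 : w.im = b := by simp [hw]
        rw [h0] at h1
        simp at h1
        exact hb (by linarith)
      have hpow : ‖x + (starRingEnd ℂ) w‖ ^ n = ‖x + w‖ ^ n :=
        mul_left_cancel₀ hwne habs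
      have heq : ‖x + (starRingEnd ℂ) w‖ = ‖x + w‖ := by
        rcases lt_trichotomy (‖x + (starRingEnd ℂ) w‖) (‖x + w‖) with
          hlt | he | hgt
        · exact absurd hpow (ne_of_lt (pow_lt_pow_left₀ hlt (norm_nonneg _) (by omega)))
        · exact he
        · exact absurd hpow (ne_of_gt (pow_lt_pow_left₀ hgt (norm_nonneg _) (by omega)))
      have hnsq : Complex.normSq (x + (starRingEnd ℂ) w) = Complex.normSq (x + w) := by
        rw [← Complex.sq_norm, ← Complex.sq_norm, heq]
      have e1 : (x + (starRingEnd ℂ) w).im = x.im - b := by simp [hw]; ring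
      have e2 : (x + w).im = x.im + b := by simp [hw]
      have e3 : (x + (starRingEnd ℂ) w).re = x.re + a := by simp [hw]
      have e4 : (x + w).re = x.re + a := by simp [hw]
      rw [Complex.normSq_apply, Complex.normSq_apply, e1, e2, e3, e4] at hnsq
      have : x.im * b = 0 := by nlinarith
      exact (mul_eq_zero.mp this).resolve_right hb
    set t := x.re + a with ht
    set θ := arccot (t / b) with hθ
    have hθ1 : 0 < θ := arccot_pos _
    have hθ2 : θ < π := arccot_lt_pi _
    have hsθ : Real.sin θ ≠ 0 := ne_of_gt (Real.sin_pos_of_pos_of_lt_pi hθ1 hθ2)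
    have hcot : b * Real.cot θ = t := by rw [hθ, cot_arccot]; field_simp
    have hx : x = ((b * Real.cot θ - a : ℝ) : ℂ) := by
      apply Complex.ext
      · simp only [Complex.ofReal_re]
        rw [hcot, ht]
        ring
      · rw [Complex.ofReal_im]
        exact him
    rw [hx] at h
    have hsin := (cond_iff a b hb n hn θ hsθ).mp h
    rw [Real.sin_eq_zero_iff] at hsin
    obtain ⟨m, hm⟩ := hsin
    have hnθ1 : 0 < (n:ℝ) * θ := by positivity
    have hnθ2 : (n:ℝ) * θ < (n:ℝ) * π := by
      exact mul_lt_mul_of_pos_left hθ2 hn0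
    have hm1 : (m:ℝ) < 1 := by
      have h1 : (m:ℝ) * π < 1 * π := by rw [one_mul]; linarith
      exact lt_of_mul_lt_mul_right h1 hπ.le
    have hm2 : -(n:ℝ) < (m:ℝ) := by
      have h1 : (-(n:ℝ)) * π < (m:ℝ) * π := by
        rw [neg_mul]
        linarith
      exact lt_of_mul_lt_mul_right h1 hπ.le
    have hm1' : m ≤ 0 := by
      have : m < 1 := by exact_mod_cast hm1
      omega
    have hm2' : -(n:ℤ) < m := by exact_mod_cast hm2
    set k : ℕ := (-m).toNat with hkdef
    have hkm : (k:ℤ) = -m := Int.toNat_of_nonneg (by omega)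
    have hkn : k < n := by omega
    refine ⟨⟨k, hkn⟩, ?_⟩
    have hkR : (k:ℝ) = -(m:ℝ) := by exact_mod_cast hkm
    have hθk : θ = (α + (k:ℝ) * π) / n := by
      rw [eq_div_iff (ne_of_gt hn0)]
      rw [hkR]
      linarith
    rw [hx]
    simp only [Fin.val_mk]
    rw [hθk]
  · rintro ⟨k, hk⟩
    have hk1 : (0:ℝ) ≤ ((k:ℕ):ℝ) := by positivity
    have hkn : ((k:ℕ):ℝ) + 1 ≤ (n:ℝ) := by exact_mod_cast k.isLt
    set θ := (α + ((k:ℕ):ℝ) * π) / n with hθ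
    have hθ1 : 0 < θ := by
      apply div_pos _ hn0
      have := mul_nonneg hk1 hπ.le
      linarith
    have hθ2 : θ < π := by
      rw [div_lt_iff₀ hn0]
      have h1 : ((k:ℕ):ℝ) * π ≤ ((n:ℝ) - 1) * π := by
        apply mul_le_mul_of_nonneg_right _ hπ.le
        linarith
      nlinarith
    have hsθ : Real.sin θ ≠ 0 := ne_of_gt (Real.sin_pos_of_pos_of_lt_pi hθ1 hθ2)
    have hsin : Real.sin (α - n * θ) = 0 := by
      have h1 : (n:ℝ) * θ = α + ((k:ℕ):ℝ) * π := by
        rw [hθ]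
        field_simp
      rw [h1, show α - (α + ((k:ℕ):ℝ) * π) = -(((k:ℕ):ℝ) * π) by ring, Real.sin_neg,
        Real.sin_nat_mul_pi, neg_zero]
    have hcond := (cond_iff a b hb n hn θ hsθ).mpr hsin
    rw [hk]
    exact hcond
end

section
/- For each $k$ with $0 \le k \le n-1$ and $\alpha = \operatorname{arccot}(a/b)$ where $b \neq 0$, the real number $\lambda_k = b \cot\frac{\alpha + k\pi}{n} - a$ satisfies $w(\lambda_k + \bar{w})^n = \bar{w}(\lambda_k + w)^n$ where $w = a+bi$. -/
open Complex Real

theorem lambda_k_root (a b : ℝ) (hb : b ≠ 0) (n : ℕ) (hn : 1 ≤ n)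
    (k : ℕ) (hk : k ≤ n - 1) (w : ℂ) (hw : w = a + b * I)
    (lam : ℝ) (hlam : lam = b * Real.cot ((arccot (a / b) + k * Real.pi) / n) - a) :
    w * ((lam : ℂ) + (starRingEnd ℂ) w) ^ n =
      (starRingEnd ℂ) w * ((lam : ℂ) + w) ^ n := by
  set α := arccot (a / b) with hα
  set θ := (α + k * Real.pi) / n with hθ
  have hn0 : (0:ℝ) < n := by exact_mod_cast hn
  have hα0 : 0 < α := by
    have := Real.arctan_lt_pi_div_two (a / b)
    simp only [hα, arccot]; linarith
  have hαπ : α < Real.pi := by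
    have := Real.neg_pi_div_two_lt_arctan (a / b)
    have hπ := Real.pi_pos
    simp only [hα, arccot]; linarith
  have hk' : (k : ℝ) ≤ (n : ℝ) - 1 := by
    have h : ((k:ℝ) + 1) ≤ (n:ℝ) := by exact_mod_cast (by omega : k + 1 ≤ n)
    linarith
  have hθ0 : 0 < θ := by
    have : (0:ℝ) ≤ k * Real.pi := by positivity
    apply div_pos; linarith; exact hn0
  have hθπ : θ < Real.pi := by
    rw [hθ, div_lt_iff₀ hn0]
    have hπ := Real.pi_pos
    nlinarith
  have hs : (0:ℝ) < Real.sin θ := Real.sin_pos_of_pos_of_lt_pi hθ0 hθπ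
  have hs' : Real.sin θ ≠ 0 := ne_of_gt hs
  -- key trig identity: b * cos α = a * sin α
  have hcot : b * Real.cos α = a * Real.sin α := by
    have hc := Real.cos_arctan_pos (a / b)
    simp only [hα, arccot, Real.cos_pi_div_two_sub, Real.sin_pi_div_two_sub,
      Real.sin_arctan, Real.cos_arctan]
    field_simp
  have h1 : (lam : ℂ) + w = (↑(b / Real.sin θ)) * (Real.cos θ + Real.sin θ * I) := by
    rw [hlam, hw, Real.cot_eq_cos_div_sin]
    have h : Complex.sin (θ:ℂ) ≠ 0 := by
      rw [← Complex.ofReal_sin]; exact_mod_cast hs'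
    rw [Complex.ofReal_sub, Complex.ofReal_mul, Complex.ofReal_div, Complex.ofReal_div]
    field_simp
    have hsC : (Real.sin θ : ℂ) ≠ 0 := Complex.ofReal_ne_zero.mpr hs'
    rw [eq_div_iff hsC, add_mul, sub_mul, div_mul_cancel₀ _ hsC]; ring
  have h2 : (lam : ℂ) + (starRingEnd ℂ) w = (↑(b / Real.sin θ)) * (Real.cos θ - Real.sin θ * I) := by
    rw [hlam, hw, Real.cot_eq_cos_div_sin]
    simp only [map_add, map_mul, Complex.conj_ofReal, Complex.conj_I]
    have h : Complex.sin (θ:ℂ) ≠ 0 := by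
      rw [← Complex.ofReal_sin]; exact_mod_cast hs'
    rw [Complex.ofReal_sub, Complex.ofReal_mul, Complex.ofReal_div, Complex.ofReal_div]
    field_simp
    have hsC : (Real.sin θ : ℂ) ≠ 0 := Complex.ofReal_ne_zero.mpr hs'
    rw [eq_div_iff hsC, add_mul, sub_mul, div_mul_cancel₀ _ hsC]; ring
  have hpow1 : ((Real.cos θ : ℂ) + Real.sin θ * I) ^ n
      = Real.cos (n * θ) + Real.sin (n * θ) * I := by
    have := Complex.cos_add_sin_mul_I_pow n (θ : ℂ)
    rw [← Complex.ofReal_cos, ← Complex.ofReal_sin] at this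
    rw [this, ← Complex.ofReal_natCast, ← Complex.ofReal_mul,
      Complex.ofReal_cos, Complex.ofReal_sin]
  have hpow2 : ((Real.cos θ : ℂ) - Real.sin θ * I) ^ n
      = Real.cos (n * θ) - Real.sin (n * θ) * I := by
    have := Complex.cos_add_sin_mul_I_pow n (-(θ : ℂ))
    simp only [Complex.cos_neg, Complex.sin_neg, mul_neg, neg_mul] at this
    rw [← Complex.ofReal_cos, ← Complex.ofReal_sin, ← sub_eq_add_neg] at this
    rw [this, ← Complex.ofReal_natCast, ← Complex.ofReal_mul,
      Complex.ofReal_cos, Complex.ofReal_sin, sub_eq_add_neg]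
  have hnθ : (n : ℝ) * θ = α + k * Real.pi := by
    rw [hθ]; field_simp
  have hcoskπ : Real.cos (k * Real.pi) = (-1 : ℝ) ^ k := by
    have := Real.cos_nat_mul_pi_sub 0 k
    simpa using this
  have hsinkπ : Real.sin (k * Real.pi) = 0 := Real.sin_nat_mul_pi k
  have hcosnθ : Real.cos ((n:ℝ) * θ) = (-1:ℝ)^k * Real.cos α := by
    rw [hnθ, Real.cos_add, hcoskπ, hsinkπ]; ring
  have hsinnθ : Real.sin ((n:ℝ) * θ) = (-1:ℝ)^k * Real.sin α := by
    rw [hnθ, Real.sin_add, hcoskπ, hsinkπ]; ring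
  rw [h1, h2, mul_pow, mul_pow, hpow1, hpow2, hcosnθ, hsinnθ, hw]
  simp only [map_add, map_mul, Complex.conj_ofReal, Complex.conj_I]
  have hcotC : (b : ℂ) * Complex.cos (α:ℂ) = (a : ℂ) * Complex.sin (α:ℂ) := by
    rw [← Complex.ofReal_cos, ← Complex.ofReal_sin]; exact_mod_cast hcot
  push_cast
  linear_combination (2 * I * (b : ℂ) ^ n * (Complex.sin (θ:ℂ))⁻¹ ^ n * (-1 : ℂ) ^ k) * hcotC
end

section
/- Define the derivative polynomials $P_n$ by $P_0(x) = x$ and $P_n(x) = (1+x^2) P'_{n-1}(x)$ for $n \geq 1$. Then for all $n \geq 0$ and all $\theta$ with $\cos\theta \neq 0$, the $n$-th derivative of $\tan$ satisfies $\frac{d^n}{d\theta^n} \tan\theta = P_n(\tan\theta)$. -/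
open Polynomial

/-- The derivative polynomials of the tangent function. -/
noncomputable def P : ℕ → Polynomial ℝ
  | 0 => Polynomial.X
  | n + 1 => (1 + Polynomial.X ^ 2) * (P n).derivative

theorem iteratedDeriv_tan (n : ℕ) (θ : ℝ) (hθ : Real.cos θ ≠ 0) :
    iteratedDeriv n Real.tan θ = (P n).eval (Real.tan θ) := by
  induction n generalizing θ with
  | zero => simp [P]
  | succ n ih =>
    rw [iteratedDeriv_succ]
    have hopen : IsOpen {x : ℝ | Real.cos x ≠ 0} :=
      isOpen_compl_singleton.preimage Real.continuous_cos
    have hev : iteratedDeriv n Real.tan =ᶠ[nhds θ] fun x => (P n).eval (Real.tan x) := by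
      filter_upwards [hopen.mem_nhds hθ] with x hx using ih x hx
    rw [hev.deriv_eq]
    have hd : HasDerivAt (fun x => (P n).eval (Real.tan x))
        ((P n).derivative.eval (Real.tan θ) * (1 / Real.cos θ ^ 2)) θ :=
      ((P n).hasDerivAt (Real.tan θ)).comp θ (Real.hasDerivAt_tan hθ)
    rw [hd.deriv]
    have h1 : (1 + Real.tan θ ^ 2)⁻¹ = Real.cos θ ^ 2 := Real.inv_one_add_tan_sq hθ
    have h2 : 1 + Real.tan θ ^ 2 = 1 / Real.cos θ ^ 2 := by
      rw [← h1]; field_simp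
    simp only [P, eval_mul, eval_add, eval_one, eval_pow, eval_X]
    rw [← h2]; ring
end

section
/- Define the tangent polynomials $T_n$ by $T_n(x) = \frac{x P_n(x) - x^2 \cdot [n=0]}{1+x^2}$ equivalently via the relation $x P_n(x) = (1+x^2) T_n(x)$ for $n \geq 1$, where $P_n$ are the derivative polynomials of tangent. Then $T_n$ has nonnegative integer coefficients and degree $n$ for $n \geq 1$. -/
open Polynomial

/-- Auxiliary: `Q k` is `T_{k+1} / x` as a polynomial over ℕ. -/
noncomputable def Q : ℕ → Polynomial ℕ
  | 0 => 1
  | k + 1 => 2 * Polynomial.X * Q k + (1 + Polynomial.X ^ 2) * (Q k).derivative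

lemma P_eq_Q (n : ℕ) :
    P (n + 1) = (1 + X ^ 2) * ((Q n).map (Nat.castRingHom ℝ)) := by
  induction n with
  | zero => simp [P, Q]
  | succ k ih =>
    show (1 + X ^ 2) * (P (k+1)).derivative = _
    rw [ih]
    rw [show Q (k+1) = 2 * X * Q k + (1 + X ^ 2) * (Q k).derivative from rfl]
    simp only [Polynomial.map_add, Polynomial.map_mul, Polynomial.map_one,
      Polynomial.map_pow, Polynomial.map_X, Polynomial.map_ofNat, derivative_map,
      derivative_mul, derivative_add, derivative_one, derivative_X_pow,
      map_ofNat, Nat.cast_ofNat]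
    ring

lemma Q_natDegree_le (k : ℕ) : (Q k).natDegree ≤ k := by
  induction k with
  | zero => simp [Q]
  | succ k ih =>
    rw [show Q (k+1) = 2 * X * Q k + (1 + X ^ 2) * (Q k).derivative from rfl]
    apply le_trans (natDegree_add_le _ _)
    apply max_le
    · apply le_trans (natDegree_mul_le)
      have : (2 * X : Polynomial ℕ).natDegree ≤ 1 := by
        apply le_trans natDegree_mul_le; simp
      omega
    · rcases Nat.eq_zero_or_pos k with h0 | hpos
      · subst h0
        have : (Q 0).derivative = 0 := by simp [Q]
        simp [this]
      · apply le_trans natDegree_mul_le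
        have h1 : (1 + X ^ 2 : Polynomial ℕ).natDegree ≤ 2 := by
          apply le_trans (natDegree_add_le _ _); simp
        have h2 : (Q k).derivative.natDegree ≤ k - 1 :=
          le_trans (natDegree_derivative_le _) (by omega)
        omega

lemma Q_coeff_ne (k : ℕ) : (Q k).coeff k ≠ 0 := by
  induction k with
  | zero => simp [Q]
  | succ k ih =>
    rw [show Q (k+1) = 2 * X * Q k + (1 + X ^ 2) * (Q k).derivative from rfl]
    rw [coeff_add]
    have h1 : (2 * X * Q k).coeff (k + 1) = 2 * (Q k).coeff k := by
      rw [mul_comm (2 : Polynomial ℕ) X, mul_assoc, coeff_X_mul]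
      simp [coeff_ofNat_mul]
    rw [h1]
    intro h
    have := Nat.eq_zero_of_add_eq_zero_right h
    omega

lemma Q_degree (k : ℕ) : (Q k).degree = k := by
  have h1 := Q_natDegree_le k
  have h2 := le_natDegree_of_ne_zero (Q_coeff_ne k)
  have hne : Q k ≠ 0 := fun h => Q_coeff_ne k (by simp [h])
  rw [degree_eq_natDegree hne, le_antisymm h1 h2]

theorem tangent_polynomials (n : ℕ) (hn : 1 ≤ n) :
    ∃ T : Polynomial ℝ,
      Polynomial.X * P n = (1 + Polynomial.X ^ 2) * T ∧
      T.degree = n ∧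
      ∀ k : ℕ, ∃ m : ℕ, T.coeff k = (m : ℝ) := by
  obtain ⟨m, rfl⟩ : ∃ m, n = m + 1 := ⟨n - 1, by omega⟩
  set q : Polynomial ℝ := (Q m).map (Nat.castRingHom ℝ) with hq
  refine ⟨X * q, ?_, ?_, ?_⟩
  · rw [P_eq_Q]; ring
  · have hinj : Function.Injective (Nat.castRingHom ℝ) := Nat.cast_injective
    have hqdeg : q.degree = (m : ℕ) := by
      rw [hq, degree_map_eq_of_injective hinj, Q_degree]
    have hqne : q ≠ 0 := by
      intro h; rw [h] at hqdeg; simp at hqdeg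
    rw [degree_mul, degree_X, hqdeg]
    push_cast
    ring
  · intro k
    cases k with
    | zero => exact ⟨0, by simp⟩
    | succ k =>
      refine ⟨(Q m).coeff k, ?_⟩
      rw [coeff_X_mul, hq, coeff_map]
      simp
end

section
/- Euler's partial fraction expansion of the tangent: for every real $z$ not of the form $(2k-1)\pi/2$, $\tan z = \sum_{k=1}^{\infty} \frac{8z}{(2k-1)^2\pi^2 - 4z^2}$. -/
open Real

open Filter Finset Metric Topology

noncomputable def TPF.r (j : ℕ) : ℝ := 4 / ((2 * (j : ℝ) + 1) ^ 2 * Real.pi ^ 2)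

noncomputable def TPF.F (n : ℕ) (w : ℂ) : ℂ :=
  ∏ j ∈ Finset.range n, (1 - (TPF.r j : ℂ) * w ^ 2)

namespace TPF

lemma r_pos (j : ℕ) : 0 < r j := by
  have := Real.pi_pos
  unfold r
  positivity

lemma prod_range_two_mul {M : Type*} [CommMonoid M] (n : ℕ) (f : ℕ → M) :
    ∏ j ∈ Finset.range (2 * n), f j = ∏ j ∈ Finset.range n, (f (2 * j) * f (2 * j + 1)) := by
  induction n with
  | zero => simp
  | succ n ih =>
    rw [Finset.prod_range_succ, ← ih, Nat.mul_succ, Finset.prod_range_succ,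
      Finset.prod_range_succ, mul_assoc]

lemma pointwise (w : ℂ) (hw : Complex.sin w ≠ 0) :
    Tendsto (fun n => F n w) atTop (𝓝 (Complex.cos w)) := by
  have hpi : (Real.pi : ℂ) ≠ 0 := Complex.ofReal_ne_zero.mpr Real.pi_ne_zero
  have hw0 : w ≠ 0 := by rintro rfl; exact hw Complex.sin_zero
  set P1 : ℕ → ℂ := fun n => ∏ j ∈ Finset.range n, (1 - (w / Real.pi) ^ 2 / ((j : ℂ) + 1) ^ 2)
    with hP1def
  set P2 : ℕ → ℂ := fun n => ∏ j ∈ Finset.range n, (1 - (2 * w / Real.pi) ^ 2 / ((j : ℂ) + 1) ^ 2)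
    with hP2def
  have e1 : (Real.pi : ℂ) * (w / Real.pi) = w := by field_simp
  have e2 : (Real.pi : ℂ) * (2 * w / Real.pi) = 2 * w := by field_simp
  have h1 : Tendsto (fun n => w * P1 n) atTop (𝓝 (Complex.sin w)) := by
    have h := Complex.tendsto_euler_sin_prod (w / Real.pi)
    rw [e1] at h; exact h
  have h2 : Tendsto (fun n => 2 * w * P2 (2 * n)) atTop (𝓝 (Complex.sin (2 * w))) := by
    have h := Complex.tendsto_euler_sin_prod (2 * w / Real.pi)
    rw [e2] at h
    exact h.comp (tendsto_id.const_mul_atTop' zero_lt_two)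
  have hkey : ∀ n, P2 (2 * n) = P1 n * F n w := by
    intro n
    simp only [hP1def, hP2def, F]
    rw [prod_range_two_mul, ← Finset.prod_mul_distrib]
    apply Finset.prod_congr rfl
    intro j _
    have hr : ((r j : ℝ) : ℂ) = 4 / ((2 * (j : ℂ) + 1) ^ 2 * (Real.pi : ℂ) ^ 2) := by
      unfold r; push_cast; rfl
    have hd1 : (2 * (j : ℂ) + 1) ≠ 0 := by
      have : ((2 * (j : ℝ) + 1 : ℝ) : ℂ) ≠ 0 :=
        Complex.ofReal_ne_zero.mpr (by positivity)
      push_cast at this; exact this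
    have hd2 : ((j : ℂ) + 1) ≠ 0 := Nat.cast_add_one_ne_zero j
    have hd3 : (2 * (j : ℂ) + 2) ≠ 0 := by
      have : ((2 * (j : ℝ) + 2 : ℝ) : ℂ) ≠ 0 := Complex.ofReal_ne_zero.mpr (by positivity)
      push_cast at this; exact this
    have e_even : 1 - (2 * w / (Real.pi : ℂ)) ^ 2 / (((2 * j : ℕ) : ℂ) + 1) ^ 2
        = 1 - (r j : ℂ) * w ^ 2 := by
      rw [hr]; push_cast; congr 1; field_simp; ring
    have e_odd : 1 - (2 * w / (Real.pi : ℂ)) ^ 2 / (((2 * j + 1 : ℕ) : ℂ) + 1) ^ 2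
        = 1 - (w / (Real.pi : ℂ)) ^ 2 / ((j : ℂ) + 1) ^ 2 := by
      push_cast
      congr 1
      rw [div_pow, div_pow, div_div, div_div,
        show (2 * (j : ℂ) + 1 + 1) = 2 * (j : ℂ) + 2 from by ring,
        div_eq_div_iff (mul_ne_zero (pow_ne_zero 2 hpi) (pow_ne_zero 2 hd3)) (mul_ne_zero (pow_ne_zero 2 hpi) (pow_ne_zero 2 hd2))]
      ring
    rw [e_even, e_odd]
    exact mul_comm _ _
  have hne : ∀ᶠ n in atTop, w * P1 n ≠ 0 := h1.eventually_ne hw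
  have hdiv : Tendsto (fun n => (2 * w * P2 (2 * n)) / (2 * (w * P1 n))) atTop
      (𝓝 (Complex.sin (2 * w) / (2 * Complex.sin w))) :=
    h2.div (h1.const_mul 2) (mul_ne_zero two_ne_zero hw)
  have hcos : Complex.sin (2 * w) / (2 * Complex.sin w) = Complex.cos w := by
    rw [Complex.sin_two_mul]; field_simp
  rw [hcos] at hdiv
  apply hdiv.congr'
  filter_upwards [hne] with n hn
  rw [hkey n, show 2 * w * (P1 n * F n w) = F n w * (2 * (w * P1 n)) from by ring,
    mul_div_cancel_right₀ _ (mul_ne_zero two_ne_zero hn)]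


lemma summable_aux : Summable (fun j : ℕ => (1 : ℝ) / ((j : ℝ) + 1) ^ 2) := by
  have := summable_one_div_nat_pow.mpr (le_refl 2)
  have h := (summable_nat_add_iff 1).mpr this
  exact h.congr fun j => by push_cast; ring

lemma summable_r : Summable r := by
  have h2 := summable_aux
  apply Summable.of_nonneg_of_le (fun j => (r_pos j).le)
    (fun j => ?_) (h2.mul_left (4 / Real.pi ^ 2))
  unfold r
  rw [div_mul_div_comm, mul_one]
  apply div_le_div_of_nonneg_left (by norm_num) (by positivity)
  nlinarith [sq_nonneg (Real.pi * (j : ℝ)), Nat.cast_nonneg (α := ℝ) j,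
    mul_nonneg (mul_nonneg (sq_nonneg Real.pi) (Nat.cast_nonneg (α := ℝ) j)) (Nat.cast_nonneg (α := ℝ) j),
    mul_nonneg (sq_nonneg Real.pi) (Nat.cast_nonneg (α := ℝ) j), sq_nonneg Real.pi]

noncomputable def u (R : ℝ) (j : ℕ) : ℝ := r j * R ^ 2

lemma summable_u (R : ℝ) : Summable (u R) := summable_r.mul_right _

lemma u_nonneg (R : ℝ) (j : ℕ) : 0 ≤ u R j := mul_nonneg (r_pos j).le (sq_nonneg R)

lemma norm_term_le {R : ℝ} (j : ℕ) {w : ℂ} (hw : ‖w‖ ≤ R) :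
    ‖(r j : ℂ) * w ^ 2‖ ≤ u R j := by
  rw [norm_mul, norm_pow, Complex.norm_real, Real.norm_eq_abs, abs_of_pos (r_pos j)]
  exact mul_le_mul_of_nonneg_left
    (pow_le_pow_left₀ (norm_nonneg w) hw 2) (r_pos j).le

lemma norm_F_le {R : ℝ} (n : ℕ) {w : ℂ} (hw : ‖w‖ ≤ R) :
    ‖F n w‖ ≤ Real.exp (∑' j, u R j) := by
  rw [F, norm_prod]
  calc ∏ j ∈ Finset.range n, ‖1 - (r j : ℂ) * w ^ 2‖
      ≤ ∏ j ∈ Finset.range n, Real.exp (u R j) := by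
        apply Finset.prod_le_prod (fun j _ => norm_nonneg _)
        intro j _
        calc ‖1 - (r j : ℂ) * w ^ 2‖ ≤ ‖(1 : ℂ)‖ + ‖(r j : ℂ) * w ^ 2‖ := norm_sub_le _ _
          _ ≤ 1 + u R j := by rw [norm_one]; linarith [norm_term_le j hw]
          _ ≤ Real.exp (u R j) := by linarith [Real.add_one_le_exp (u R j)]
    _ = Real.exp (∑ j ∈ Finset.range n, u R j) := (Real.exp_sum _ _).symm
    _ ≤ Real.exp (∑' j, u R j) :=
        Real.exp_le_exp.mpr ((summable_u R).sum_le_tsum _ (fun j _ => u_nonneg R j))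

noncomputable def L : ℂ → ℂ := fun w => 1 + ∑' j, F j w * (-(r j : ℂ) * w ^ 2)

lemma partial_sum_eq (n : ℕ) (w : ℂ) :
    ∑ j ∈ Finset.range n, F j w * (-(r j : ℂ) * w ^ 2) = F n w - 1 := by
  have h : ∀ j, F j w * (-(r j : ℂ) * w ^ 2) = F (j + 1) w - F j w := by
    intro j
    rw [F, F, Finset.prod_range_succ]
    ring
  rw [Finset.sum_congr rfl (fun j _ => h j), Finset.sum_range_sub (fun j => F j w)]
  simp [F]

lemma tuo (R : ℝ) : TendstoUniformlyOn F L atTop (Metric.closedBall 0 R) := by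
  set C := Real.exp (∑' j, u R j) with hC
  have hb : ∀ (j : ℕ) (w : ℂ), w ∈ Metric.closedBall (0 : ℂ) R →
      ‖F j w * (-(r j : ℂ) * w ^ 2)‖ ≤ C * u R j := by
    intro j w hw
    rw [Metric.mem_closedBall, dist_zero_right] at hw
    rw [show F j w * (-(r j : ℂ) * w ^ 2) = -(F j w * ((r j : ℂ) * w ^ 2)) from by ring,
      norm_neg, norm_mul]
    exact mul_le_mul (norm_F_le j hw) (norm_term_le j hw) (norm_nonneg _)
      (Real.exp_pos _).le
  have h := tendstoUniformlyOn_tsum_nat ((summable_u R).mul_left C) hb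
  rw [Metric.tendstoUniformlyOn_iff] at h ⊢
  intro ε hε
  filter_upwards [h ε hε] with n hn w hw
  have := hn w hw
  rw [partial_sum_eq] at this
  have hL : L w = 1 + ∑' j, F j w * (-(r j : ℂ) * w ^ 2) := rfl
  rw [hL]
  calc dist (1 + ∑' j, F j w * (-(r j : ℂ) * w ^ 2)) (F n w)
      = dist (∑' j, F j w * (-(r j : ℂ) * w ^ 2)) (F n w - 1) := by
        rw [dist_eq_norm, dist_eq_norm]; congr 1; ring
    _ < ε := this

lemma tlu : TendstoLocallyUniformly F L atTop := by
  rw [← tendstoLocallyUniformlyOn_univ,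
    tendstoLocallyUniformlyOn_iff_forall_isCompact isOpen_univ]
  intro K _ hK
  obtain ⟨R, hR⟩ := (Metric.isBounded_iff_subset_closedBall 0).mp hK.isBounded
  exact (tuo R).mono hR

lemma F_differentiable (n : ℕ) : Differentiable ℂ (F n) := by
  intro w
  have : F n = fun w => ∏ j ∈ Finset.range n, (1 - (r j : ℂ) * w ^ 2) := rfl
  rw [this]
  apply DifferentiableAt.fun_finsetProd
  intro i _
  exact ((differentiableAt_pow 2).const_mul _).const_sub 1

lemma L_eq_cos : L = Complex.cos := by
  have hdiff : ∀ n, DifferentiableOn ℂ (F n) Set.univ :=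
    fun n => (F_differentiable n).differentiableOn
  have hLdiff : DifferentiableOn ℂ L Set.univ :=
    (tendstoLocallyUniformlyOn_univ.mpr tlu).differentiableOn
      (Filter.Eventually.of_forall hdiff) isOpen_univ
  have hLan : AnalyticOnNhd ℂ L Set.univ := hLdiff.analyticOnNhd isOpen_univ
  have hcan : AnalyticOnNhd ℂ Complex.cos Set.univ :=
    Complex.differentiable_cos.differentiableOn.analyticOnNhd isOpen_univ
  apply AnalyticOnNhd.eq_of_eventuallyEq hLan hcan (z₀ := ((Real.pi / 2 : ℝ) : ℂ))
  have hball : Metric.ball ((Real.pi / 2 : ℝ) : ℂ) 1 ∈ 𝓝 ((Real.pi / 2 : ℝ) : ℂ) :=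
    Metric.ball_mem_nhds _ one_pos
  apply Filter.eventuallyEq_of_mem hball
  intro w hw
  have hsin : Complex.sin w ≠ 0 := by
    intro h0
    obtain ⟨k, rfl⟩ := Complex.sin_eq_zero_iff.mp h0
    rw [Metric.mem_ball, Complex.dist_eq] at hw
    rw [show ((k : ℂ) * (Real.pi : ℂ) - ((Real.pi / 2 : ℝ) : ℂ)) =
      (((k : ℝ) * Real.pi - Real.pi / 2 : ℝ) : ℂ) from by push_cast; ring,
      Complex.norm_real, Real.norm_eq_abs] at hw
    have h1 : (1 : ℝ) ≤ |2 * (k : ℝ) - 1| := by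
      have hk : (1 : ℤ) ≤ |2 * k - 1| := Int.one_le_abs (by omega)
      have hcast : ((|2 * k - 1| : ℤ) : ℝ) = |2 * (k : ℝ) - 1| := by push_cast; ring_nf
      rw [← hcast]
      exact_mod_cast hk
    have hge : Real.pi / 2 ≤ |(k : ℝ) * Real.pi - Real.pi / 2| := by
      rw [show (k : ℝ) * Real.pi - Real.pi / 2 = (2 * (k : ℝ) - 1) * (Real.pi / 2) from by ring,
        abs_mul, abs_of_pos (by positivity : (0 : ℝ) < Real.pi / 2)]
      nlinarith [Real.pi_pos]
    linarith [Real.pi_gt_three]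
  exact tendsto_nhds_unique ((tendstoLocallyUniformlyOn_univ.mpr tlu).tendsto_at (Set.mem_univ w)) (pointwise w hsin)

end TPF

theorem tan_partial_fraction (z : ℝ) (hz : Real.cos z ≠ 0) :
    Real.tan z = ∑' k : ℕ,
      8 * z / ((2 * (k : ℝ) + 1) ^ 2 * Real.pi ^ 2 - 4 * z ^ 2) := by
  classical
  set t : ℕ → ℝ := fun k => 8 * z / ((2 * (k : ℝ) + 1) ^ 2 * Real.pi ^ 2 - 4 * z ^ 2) with ht
  have hDne : ∀ j : ℕ, (2 * (j : ℝ) + 1) ^ 2 * Real.pi ^ 2 - 4 * z ^ 2 ≠ 0 := by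
    intro j h0
    have hfact : (2 * z - (2 * (j : ℝ) + 1) * Real.pi) * (2 * z + (2 * (j : ℝ) + 1) * Real.pi)
        = 0 := by nlinarith [h0]
    rcases mul_eq_zero.mp hfact with h | h
    · apply hz
      rw [Real.cos_eq_zero_iff]
      exact ⟨(j : ℤ), by push_cast; linarith⟩
    · apply hz
      rw [Real.cos_eq_zero_iff]
      exact ⟨-(j : ℤ) - 1, by push_cast; linarith⟩
  have hfacR : ∀ j : ℕ, (1 : ℝ) - TPF.r j * z ^ 2 ≠ 0 := by
    intro j h0
    apply hDne j
    have hd : ((2 * (j : ℝ) + 1) ^ 2 * Real.pi ^ 2) ≠ 0 := by positivity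
    unfold TPF.r at h0
    field_simp at h0
    nlinarith [h0]
  have hfac : ∀ j : ℕ, (1 : ℂ) - (TPF.r j : ℂ) * (z : ℂ) ^ 2 ≠ 0 := by
    intro j h0
    apply hfacR j
    have : (((1 : ℝ) - TPF.r j * z ^ 2 : ℝ) : ℂ) = 0 := by push_cast; rw [← h0]
    exact_mod_cast this
  have hcosz : Complex.cos (z : ℂ) ≠ 0 := by
    rw [← Complex.ofReal_cos]
    exact Complex.ofReal_ne_zero.mpr hz
  have hmain := Complex.logDeriv_tendsto (f := TPF.F) (g := Complex.cos) isOpen_univ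
    (x := (z : ℂ)) (Set.mem_univ _)
    (by rw [← TPF.L_eq_cos]; exact tendstoLocallyUniformlyOn_univ.mpr TPF.tlu)
    (Filter.Eventually.of_forall fun n => (TPF.F_differentiable n).differentiableOn) hcosz
  rw [Complex.logDeriv_cos, Pi.neg_apply] at hmain
  have hlog : ∀ n : ℕ, logDeriv (TPF.F n) (z : ℂ) = ∑ j ∈ Finset.range n, -(t j : ℂ) := by
    intro n
    have hld := logDeriv_prod (s := Finset.range n) (f := fun j (w : ℂ) => 1 - (TPF.r j : ℂ) * w ^ 2)
      (x := ((z : ℝ) : ℂ)) (fun j _ => hfac j)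
      (fun j _ => ((differentiableAt_pow 2).const_mul _).const_sub 1)
    rw [show TPF.F n = (fun w : ℂ => ∏ j ∈ Finset.range n, (1 - (TPF.r j : ℂ) * w ^ 2)) from rfl,
      hld]
    apply Finset.sum_congr rfl
    intro j _
    have hder : HasDerivAt (fun w : ℂ => 1 - (TPF.r j : ℂ) * w ^ 2)
        (-((TPF.r j : ℂ) * (2 * (z : ℂ) ^ 1))) (z : ℂ) :=
      ((hasDerivAt_pow 2 (z : ℂ)).const_mul _).const_sub 1
    rw [logDeriv_apply, hder.deriv]
    have hrc : ((TPF.r j : ℝ) : ℂ) = 4 / ((2 * (j : ℂ) + 1) ^ 2 * (Real.pi : ℂ) ^ 2) := by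
      unfold TPF.r; push_cast; norm_num
    have hdc : ((2 * (j : ℂ) + 1) ^ 2 * (Real.pi : ℂ) ^ 2) ≠ 0 := by
      have := Complex.ofReal_ne_zero.mpr
        (show (2 * (j : ℝ) + 1) ^ 2 * Real.pi ^ 2 ≠ 0 by positivity)
      push_cast at this; exact this
    have hDc : ((2 * (j : ℂ) + 1) ^ 2 * (Real.pi : ℂ) ^ 2 - 4 * (z : ℂ) ^ 2) ≠ 0 := by
      have := Complex.ofReal_ne_zero.mpr (hDne j)
      push_cast at this; exact this
    have h1 : (1 : ℂ) - 4 / ((2 * (j : ℂ) + 1) ^ 2 * (Real.pi : ℂ) ^ 2) * (z : ℂ) ^ 2 ≠ 0 := by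
      rw [← hrc]; exact hfac j
    have hbeta : ((fun j (w : ℂ) => 1 - (TPF.r j : ℂ) * w ^ 2) j)
        = (fun w : ℂ => 1 - (TPF.r j : ℂ) * w ^ 2) := rfl
    simp only [ht, pow_one]
    push_cast
    rw [hrc]
    rw [div_eq_iff h1]
    generalize (2 * (j : ℂ) + 1) ^ 2 * (Real.pi : ℂ) ^ 2 = D at hdc hDc h1 ⊢
    field_simp
    ring
  simp_rw [hlog] at hmain
  have hmain2 : Filter.Tendsto (fun n : ℕ => ∑ j ∈ Finset.range n, t j) Filter.atTop
      (𝓝 (Real.tan z)) := by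
    have hneg := hmain.neg
    rw [neg_neg] at hneg
    have hcast : ∀ n : ℕ, ((∑ j ∈ Finset.range n, t j : ℝ) : ℂ)
        = -∑ j ∈ Finset.range n, -(t j : ℂ) := by
      intro n; push_cast; simp [Finset.sum_neg_distrib]
    have hre := (Complex.continuous_re.tendsto _).comp hneg
    have : Filter.Tendsto (fun n : ℕ => ∑ j ∈ Finset.range n, t j) Filter.atTop
        (𝓝 ((Complex.tan (z : ℂ)).re)) := by
      apply hre.congr
      intro n
      simp only [Function.comp_apply]
      rw [← hcast n, Complex.ofReal_re]
    rwa [← Complex.ofReal_tan, Complex.ofReal_re] at this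
  have hsum : Summable t := by
    set N := ⌈|z|⌉₊ with hN
    rw [← summable_nat_add_iff N]
    apply Summable.of_norm_bounded (g := fun n : ℕ => (8 * |z| / 5) * (1 / ((n : ℝ) + 1) ^ 2))
      (TPF.summable_aux.mul_left _)
    intro n
    have hzN : |z| ≤ (N : ℝ) := Nat.le_ceil _
    have hk : (N : ℝ) ≤ ((n + N : ℕ) : ℝ) := by push_cast; linarith [Nat.cast_nonneg (α := ℝ) n]
    set k : ℕ := n + N with hkdef
    have hz2 : 4 * z ^ 2 ≤ 4 * ((k : ℝ) + 1) ^ 2 := by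
      have h1 : |z| ≤ (k : ℝ) + 1 := by
        calc |z| ≤ (N : ℝ) := hzN
          _ ≤ (k : ℝ) + 1 := by push_cast [hkdef]; linarith [Nat.cast_nonneg (α := ℝ) n]
      nlinarith [abs_nonneg z, sq_abs z]
    have hpi2 : (9 : ℝ) < Real.pi ^ 2 := by nlinarith [Real.pi_gt_three, Real.pi_pos]
    have hD : 5 * ((k : ℝ) + 1) ^ 2 ≤ (2 * (k : ℝ) + 1) ^ 2 * Real.pi ^ 2 - 4 * z ^ 2 := by
      have h2 : ((k : ℝ) + 1) ^ 2 ≤ (2 * (k : ℝ) + 1) ^ 2 := by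
        nlinarith [Nat.cast_nonneg (α := ℝ) k]
      nlinarith [Nat.cast_nonneg (α := ℝ) k]
    have hDpos : 0 < (2 * (k : ℝ) + 1) ^ 2 * Real.pi ^ 2 - 4 * z ^ 2 := by
      have : (0 : ℝ) < 5 * ((k : ℝ) + 1) ^ 2 := by positivity
      linarith
    have hknn : ((n : ℝ) + 1) ^ 2 ≤ ((k : ℝ) + 1) ^ 2 := by
      have : (n : ℝ) ≤ (k : ℝ) := by
        rw [hkdef]; push_cast; linarith [Nat.cast_nonneg (α := ℝ) N]
      nlinarith [Nat.cast_nonneg (α := ℝ) n]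
    calc ‖t k‖ = 8 * |z| / ((2 * (k : ℝ) + 1) ^ 2 * Real.pi ^ 2 - 4 * z ^ 2) := by
          rw [ht]
          simp only [norm_div, Real.norm_eq_abs]
          rw [abs_of_pos hDpos, abs_mul, abs_of_nonneg (by norm_num : (0:ℝ) ≤ (8:ℝ))]
      _ ≤ 8 * |z| / (5 * ((k : ℝ) + 1) ^ 2) := by gcongr
      _ ≤ 8 * |z| / (5 * ((n : ℝ) + 1) ^ 2) := by
          gcongr 8 * |z| / (5 * ?_)
      _ = (8 * |z| / 5) * (1 / ((n : ℝ) + 1) ^ 2) := by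
          rw [div_mul_div_comm, mul_one]
  have hsumtendsto := hsum.hasSum.tendsto_sum_nat
  exact tendsto_nhds_unique hmain2 hsumtendsto
end

section
/- Let $u \in (0,1)$ be the unique fixed point of $\cos$, i.e., $\cos u = u$. Then the infimum over $t > 0$ of $K(t) = \frac{1}{t} + \tan t$ restricted to $t \in (0, \pi/2)$ is attained at $t = u$ and equals $\frac{1}{u}(1 + \sqrt{1 - u^2})$. -/
open Real Set

theorem spectral_radius_tangent_law (u : ℝ) (hu : u ∈ Set.Ioo (0 : ℝ) 1)
    (hfix : Real.cos u = u) :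
    IsLeast ((fun t : ℝ => 1 / t + Real.tan t) '' Set.Ioo 0 (Real.pi / 2))
        (1 / u + Real.tan u) ∧
      1 / u + Real.tan u = (1 / u) * (1 + Real.sqrt (1 - u ^ 2)) := by
  obtain ⟨hu0, hu1⟩ := hu
  have hpi : (3:ℝ) < Real.pi := Real.pi_gt_three
  have huπ : u < Real.pi / 2 := by linarith
  set K : ℝ → ℝ := fun t => 1 / t + Real.tan t with hKdef
  have hderiv : ∀ t ∈ Ioo (0:ℝ) (Real.pi/2),
      HasDerivAt K (1 / Real.cos t ^ 2 - 1 / t ^ 2) t := by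
    intro t ht
    have hc : Real.cos t ≠ 0 :=
      (Real.cos_pos_of_mem_Ioo ⟨by linarith [ht.1], ht.2⟩).ne'
    have h1 : HasDerivAt (fun t : ℝ => 1 / t) (-(1 / t ^ 2)) t := by
      simpa [one_div] using hasDerivAt_inv ht.1.ne'
    have h2 := Real.hasDerivAt_tan hc
    have := h1.add h2
    exact this.congr_deriv (by ring)
  have hanti_g : StrictAntiOn (fun t => Real.cos t - t) (Icc (0:ℝ) (Real.pi/2)) := by
    apply strictAntiOn_of_deriv_neg (convex_Icc _ _)
      ((by fun_prop : Continuous fun t : ℝ => Real.cos t - t).continuousOn)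
    intro x hx
    rw [interior_Icc] at hx
    have hd : HasDerivAt (fun t => Real.cos t - t) (-Real.sin x - 1) x :=
      (Real.hasDerivAt_cos x).sub (hasDerivAt_id x)
    rw [hd.deriv]
    have hs : 0 < Real.sin x := Real.sin_pos_of_pos_of_lt_pi hx.1 (by linarith [hx.2])
    linarith
  have hcmp : ∀ t ∈ Icc (0:ℝ) (Real.pi/2), (t < u → t < Real.cos t) ∧ (u < t → Real.cos t < t) := by
    intro t ht
    have huI : u ∈ Icc (0:ℝ) (Real.pi/2) := ⟨hu0.le, huπ.le⟩
    constructor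
    · intro h
      have h2 : Real.cos u - u < Real.cos t - t := hanti_g ht huI h
      rw [hfix] at h2; linarith
    · intro h
      have h2 : Real.cos t - t < Real.cos u - u := hanti_g huI ht h
      rw [hfix] at h2; linarith
  have hcontK : ∀ t ∈ Ioo (0:ℝ) (Real.pi/2), ContinuousAt K t :=
    fun t ht => (hderiv t ht).continuousAt
  -- strict mono on [u, π/2)
  have hmono : StrictMonoOn K (Ico u (Real.pi/2)) := by
    apply strictMonoOn_of_deriv_pos (convex_Ico _ _)
    · intro t ht
      exact (hcontK t ⟨lt_of_lt_of_le hu0 ht.1, ht.2⟩).continuousWithinAt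
    · intro x hx
      rw [interior_Ico] at hx
      have hxI : x ∈ Ioo (0:ℝ) (Real.pi/2) := ⟨hu0.trans hx.1, hx.2⟩
      rw [(hderiv x hxI).deriv]
      have hcpos : 0 < Real.cos x := Real.cos_pos_of_mem_Ioo ⟨by linarith [hxI.1], hxI.2⟩
      have hlt : Real.cos x < x := (hcmp x ⟨hxI.1.le, hxI.2.le⟩).2 hx.1
      have h2 : Real.cos x ^ 2 < x ^ 2 := by nlinarith [mul_pos hcpos hxI.1]
      have : 1 / x ^ 2 < 1 / Real.cos x ^ 2 :=
        one_div_lt_one_div_of_lt (pow_pos hcpos 2) h2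
      linarith
  have hantiK : StrictAntiOn K (Ioc (0:ℝ) u) := by
    apply strictAntiOn_of_deriv_neg (convex_Ioc _ _)
    · intro t ht
      exact (hcontK t ⟨ht.1, lt_of_le_of_lt ht.2 huπ⟩).continuousWithinAt
    · intro x hx
      rw [interior_Ioc] at hx
      have hxI : x ∈ Ioo (0:ℝ) (Real.pi/2) := ⟨hx.1, hx.2.trans huπ⟩
      rw [(hderiv x hxI).deriv]
      have hcpos : 0 < Real.cos x := Real.cos_pos_of_mem_Ioo ⟨by linarith [hxI.1], hxI.2⟩
      have hlt : x < Real.cos x := (hcmp x ⟨hxI.1.le, hxI.2.le⟩).1 hx.2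
      have h2 : x ^ 2 < Real.cos x ^ 2 := by nlinarith [mul_pos hcpos hxI.1]
      have : 1 / Real.cos x ^ 2 < 1 / x ^ 2 :=
        one_div_lt_one_div_of_lt (pow_pos hxI.1 2) h2
      linarith
  have huIoo : u ∈ Ioo (0:ℝ) (Real.pi/2) := ⟨hu0, huπ⟩
  constructor
  · constructor
    · exact ⟨u, huIoo, rfl⟩
    · rintro y ⟨t, ht, rfl⟩
      rcases lt_trichotomy t u with h | h | h
      · exact (hantiK ⟨ht.1, h.le⟩ ⟨hu0, le_refl u⟩ h).le
      · subst h; exact le_refl _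
      · exact (hmono ⟨le_refl u, huπ⟩ ⟨h.le, ht.2⟩ h).le
  · have hsin : Real.sin u = Real.sqrt (1 - u ^ 2) := by
      have h := Real.sin_eq_sqrt_one_sub_cos_sq hu0.le (by linarith)
      rw [h, hfix]
    have htan : Real.tan u = Real.sqrt (1 - u ^ 2) / u := by
      rw [Real.tan_eq_sin_div_cos, hsin, hfix]
    rw [htan]
    field_simp
end

section
/- For $x = \frac{1}{\pi/2 + k\pi}$ with $k \in \mathbb{Z}$ (so that $1/x$ is a pole of tangent), the nontangential limit $\lim_{\epsilon \to 0^+} i\epsilon \tan\left(\frac{1}{x + i\epsilon}\right) = x^2$. -/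
open Complex Filter

theorem levy_atom_tangent (k : ℤ) (x : ℝ)
    (hx : x = 1 / (Real.pi / 2 + k * Real.pi)) :
    Filter.Tendsto
      (fun ε : ℝ => (ε : ℂ) * Complex.I * Complex.tan (1 / ((x : ℂ) + ε * Complex.I)))
      (nhdsWithin 0 (Set.Ioi 0)) (nhds ((x : ℂ) ^ 2)) := by
  set c : ℝ := Real.pi / 2 + k * Real.pi with hc_def
  have h2k : (2 * (k : ℝ) + 1) ≠ 0 := by
    have h : (2 * k + 1 : ℤ) ≠ 0 := by omega
    exact_mod_cast h
  have hc : c ≠ 0 := by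
    have hceq : c = Real.pi * (2 * (k : ℝ) + 1) / 2 := by rw [hc_def]; ring
    rw [hceq]
    exact div_ne_zero (mul_ne_zero Real.pi_ne_zero h2k) two_ne_zero
  have hcx : c * x = 1 := by rw [hx]; field_simp
  have hcC : (c : ℂ) ≠ 0 := by exact_mod_cast hc
  have hcxC : (c : ℂ) * (x : ℝ) = 1 := by exact_mod_cast hcx
  have hxC : (x : ℂ) ≠ 0 := by
    intro h
    rw [h, mul_zero] at hcxC
    exact one_ne_zero hcxC.symm
  set w : ℝ → ℂ := fun ε => Complex.I * c * ε / ((x : ℂ) + ε * Complex.I) with hw_def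
  -- z * cot z → 1 as z → 0 (z ≠ 0)
  have hslope : Tendsto (fun z : ℂ => Complex.sin z / z) (nhdsWithin 0 {(0 : ℂ)}ᶜ) (nhds 1) := by
    have h := Complex.hasDerivAt_sin 0
    rw [hasDerivAt_iff_tendsto_slope] at h
    have h2 : Tendsto (fun z : ℂ => Complex.sin z * z⁻¹) (nhdsWithin 0 {(0 : ℂ)}ᶜ) (nhds 1) := by
      simpa [slope_fun_def, Complex.sin_zero, Complex.cos_zero, mul_comm] using h
    simpa [div_eq_mul_inv] using h2
  have hzs : Tendsto (fun z : ℂ => z / Complex.sin z) (nhdsWithin 0 {(0 : ℂ)}ᶜ) (nhds 1) := by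
    simpa [inv_div] using hslope.inv₀ one_ne_zero
  have hcos : Tendsto (fun z : ℂ => Complex.cos z) (nhdsWithin 0 {(0 : ℂ)}ᶜ) (nhds 1) := by
    have := Complex.continuous_cos.tendsto 0
    rw [Complex.cos_zero] at this
    exact this.mono_left nhdsWithin_le_nhds
  have hzcot : Tendsto (fun z : ℂ => z * (Complex.cos z / Complex.sin z))
      (nhdsWithin 0 {(0 : ℂ)}ᶜ) (nhds 1) := by
    have := hcos.mul hzs
    rw [mul_one] at this
    refine this.congr fun z => ?_
    ring
  -- w tends to 0 within {0}ᶜ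
  have hεC : Tendsto (fun ε : ℝ => (ε : ℂ)) (nhdsWithin 0 (Set.Ioi 0)) (nhds 0) := by
    have := Complex.continuous_ofReal.tendsto 0
    simpa using this.mono_left nhdsWithin_le_nhds
  have hden : Tendsto (fun ε : ℝ => (x : ℂ) + ε * Complex.I) (nhdsWithin 0 (Set.Ioi 0))
      (nhds (x : ℂ)) := by
    have hcont : Continuous (fun ε : ℝ => (x : ℂ) + ε * Complex.I) := by fun_prop
    have h0 := (hcont.tendsto 0).mono_left
      (nhdsWithin_le_nhds : nhdsWithin (0 : ℝ) (Set.Ioi 0) ≤ nhds 0)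
    simpa using h0
  have hne : ∀ ε : ℝ, 0 < ε → (x : ℂ) + ε * Complex.I ≠ 0 := by
    intro ε hε h
    have him : ((x : ℂ) + ε * Complex.I).im = ε := by simp
    rw [h] at him
    simp at him
    exact hε.ne' him.symm
  have hw0 : Tendsto w (nhdsWithin 0 (Set.Ioi 0)) (nhdsWithin 0 {(0 : ℂ)}ᶜ) := by
    rw [tendsto_nhdsWithin_iff]
    constructor
    · have hnum : Tendsto (fun ε : ℝ => Complex.I * c * ε) (nhdsWithin 0 (Set.Ioi 0))
          (nhds 0) := by
        have hcont : Continuous (fun ε : ℝ => Complex.I * (c : ℂ) * ε) := by fun_prop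
        have h0 := (hcont.tendsto 0).mono_left
          (nhdsWithin_le_nhds : nhdsWithin (0 : ℝ) (Set.Ioi 0) ≤ nhds 0)
        simpa using h0
      have := hnum.div hden hxC
      rw [zero_div] at this
      exact this
    · filter_upwards [self_mem_nhdsWithin] with ε hε
      have hε' : (0 : ℝ) < ε := hε
      simp only [hw_def, Set.mem_compl_iff, Set.mem_singleton_iff]
      refine div_ne_zero ?_ (hne ε hε')
      refine mul_ne_zero (mul_ne_zero Complex.I_ne_zero hcC) ?_
      exact_mod_cast hε'.ne'
  -- eventual equality with the product form
  have heq : ∀ᶠ ε : ℝ in nhdsWithin 0 (Set.Ioi 0),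
      (ε : ℂ) * Complex.I * Complex.tan (1 / ((x : ℂ) + ε * Complex.I)) =
        (((x : ℂ) + ε * Complex.I) / c) * (w ε * (Complex.cos (w ε) / Complex.sin (w ε))) := by
    filter_upwards [self_mem_nhdsWithin] with ε hε
    have hε' : (0 : ℝ) < ε := hε
    have hd := hne ε hε'
    have h1 : 1 / ((x : ℂ) + ε * Complex.I) = (c : ℂ) - w ε := by
      rw [hw_def]
      field_simp
      linear_combination (-1 : ℂ) * hcxC
    have h2 : Complex.tan ((c : ℂ) - w ε) = Complex.cos (w ε) / Complex.sin (w ε) := by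
      have hcC2 : (c : ℂ) = Real.pi / 2 + k * Real.pi := by
        rw [hc_def]; norm_num
      rw [hcC2]
      have : (Real.pi / 2 + (k : ℂ) * Real.pi) - w ε =
          (Real.pi / 2 - w ε) + (k : ℤ) * Real.pi := by push_cast; ring
      rw [this, Complex.tan_add_int_mul_pi, Complex.tan_pi_div_two_sub,
        Complex.tan_eq_sin_div_cos, inv_div]
    have hsc : (ε : ℂ) * Complex.I = (((x : ℂ) + ε * Complex.I) / c) * w ε := by
      rw [hw_def]
      field_simp
    rw [h1, h2, ← mul_assoc, ← hsc]
  -- conclude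
  have hfin := (hden.div_const (c : ℂ)).mul (hzcot.comp hw0)
  rw [mul_one] at hfin
  have hx2 : ((x : ℂ) ^ 2) = (x : ℂ) / c := by
    field_simp
    linear_combination hcxC
  rw [hx2]
  exact hfin.congr' (heq.mono fun ε h => h.symm)
end
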